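/- arXiv:1006.1413 — 7 statements merged into one kernel-verified Lean document; each statement's English description precedes it below -/
import Mathlib

section
/- If τ is an object type such that τ ≤ σ holds and v ∈ τ holds, then there exists an object type τ′ (not necessarily equal to τ) such that v ∈ τ′ holds, and such that there exists a contractive derivation of τ′ ≤ σ whose first (root) applied rule is (∨R1), (∨R2) or (obj). -/
/-! ## Possibly infinite types and values, coinductively defined as M-types -/

/-- Shapes of type constructors: `int`, object types (class name plus finite
set of field names), and binary union. -/
inductive TyShape : Type where
  | int : TyShape
  | obj : String → Finset String → TyShape
  | union : TyShape

/-- Children (immediate subterms) of each shape. -/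
def TyChild : TyShape → Type
  | .int => Empty
  | .obj _ fs => {f : String // f ∈ fs}
  | .union => Bool

/-- The polynomial functor whose final coalgebra is the set of types. -/
def TyP : PFunctor := ⟨TyShape, TyChild⟩

/-- Possibly infinite types, coinductively generated by
`τ ::= int | obj C [f₁:τ₁,…,fₙ:τₙ] | τ₁ ∨ τ₂`. -/
def Ty : Type := TyP.M

/-- The type `int`. -/
def Ty.int : Ty := PFunctor.M.mk ⟨TyShape.int, Empty.elim⟩

/-- The union type `τ₁ ∨ τ₂`. -/
def Ty.union (t1 t2 : Ty) : Ty :=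
  PFunctor.M.mk ⟨TyShape.union, fun b => cond b t1 t2⟩

/-- The object type `obj C [f:τ_f  |  f ∈ fs]`. -/
def Ty.obj (c : String) (fs : Finset String) (ch : {f : String // f ∈ fs} → Ty) : Ty :=
  PFunctor.M.mk ⟨TyShape.obj c fs, ch⟩

/-- Object type with no fields. -/
def Ty.obj0 (c : String) : Ty :=
  Ty.obj c ∅ (fun f => absurd f.2 (Finset.notMem_empty f.1))

/-- Object type with a single field. -/
def Ty.obj1 (c f : String) (t : Ty) : Ty :=
  Ty.obj c {f} (fun _ => t)

/-- Object type with two (distinct) fields. -/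
def Ty.obj2 (c f1 f2 : String) (t1 t2 : Ty) : Ty :=
  Ty.obj c {f1, f2} (fun g => if g.1 = f1 then t1 else t2)

/-- Shapes of values: integers and objects. -/
inductive ValShape : Type where
  | int : ℤ → ValShape
  | obj : String → Finset String → ValShape

/-- Children of each value shape. -/
def ValChild : ValShape → Type
  | .int _ => Empty
  | .obj _ fs => {f : String // f ∈ fs}

/-- The polynomial functor whose final coalgebra is the set of values. -/
def ValP : PFunctor := ⟨ValShape, ValChild⟩

/-- Possibly infinite values, coinductively generated by
`v ::= i | obj C [f₁↦v₁,…,fₙ↦vₙ]`. -/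
def Val : Type := ValP.M

/-- The integer value `i`. -/
def Val.int (i : ℤ) : Val := PFunctor.M.mk ⟨ValShape.int i, Empty.elim⟩

/-- The object value `obj C [f ↦ v_f | f ∈ fs]`. -/
def Val.obj (c : String) (fs : Finset String) (ch : {f : String // f ∈ fs} → Val) : Val :=
  PFunctor.M.mk ⟨ValShape.obj c fs, ch⟩

/-- Object value with a single field. -/
def Val.obj1 (c f : String) (v : Val) : Val :=
  Val.obj c {f} (fun _ => v)

/-! ## Subtyping

A contractive derivation is a possibly infinite derivation with no
sub-derivation built only with rules (∨R1) and (∨R2); equivalently, the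
premises of (∨R1) and (∨R2) are interpreted inductively (within a layer),
while the premises of all other rules are interpreted coinductively (they
refer to the greatest fixed point `Subty`). -/

/-- One inductive layer of the subtyping rules: premises of (∨R1)/(∨R2) are
inductive occurrences (so only finitely many consecutive applications of
these rules are possible, i.e. derivations are contractive), premises of all
other rules are occurrences of the coinductively-interpreted relation `R`. -/
inductive SubStep (R : Ty → Ty → Prop) : Ty → Ty → Prop where
  | int : SubStep R Ty.int Ty.int
  | unionR1 {t t1 t2 : Ty} : SubStep R t t1 → SubStep R t (Ty.union t1 t2)
  | unionR2 {t t1 t2 : Ty} : SubStep R t t2 → SubStep R t (Ty.union t1 t2)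
  | unionL {t1 t2 t : Ty} : R t1 t → R t2 t → SubStep R (Ty.union t1 t2) t
  | obj {c : String} {fs fs' : Finset String} (hsub : fs' ⊆ fs)
      {ch : {f : String // f ∈ fs} → Ty} {ch' : {f : String // f ∈ fs'} → Ty} :
      (∀ (f : String) (h : f ∈ fs'), R (ch ⟨f, hsub h⟩) (ch' ⟨f, h⟩)) →
      SubStep R (Ty.obj c fs ch) (Ty.obj c fs' ch')
  | distr {c : String} {fs : Finset String} {ch : {f : String // f ∈ fs} → Ty}
      {f : String} (hf : f ∈ fs) {s1 s2 t : Ty} :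
      ch ⟨f, hf⟩ = Ty.union s1 s2 →
      R (Ty.obj c fs (fun g => if g.1 = f then s1 else ch g)) t →
      R (Ty.obj c fs (fun g => if g.1 = f then s2 else ch g)) t →
      SubStep R (Ty.obj c fs ch) t

/-- The subtyping relation `τ ≤ τ′`: greatest fixed point of `SubStep`,
i.e. existence of a contractive, possibly infinite derivation. -/
def Subty (t1 t2 : Ty) : Prop :=
  ∃ R : Ty → Ty → Prop, (∀ x y, R x y → SubStep R x y) ∧ R t1 t2

/-! ## Membership of values in types -/

/-- One inductive layer of the membership rules: premises of (∨L)/(∨R) are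
inductive (contractiveness), premises of (obj) are coinductive. -/
inductive MemStep (R : Val → Ty → Prop) : Val → Ty → Prop where
  | int (i : ℤ) : MemStep R (Val.int i) Ty.int
  | unionL {v : Val} {t1 t2 : Ty} : MemStep R v t1 → MemStep R v (Ty.union t1 t2)
  | unionR {v : Val} {t1 t2 : Ty} : MemStep R v t2 → MemStep R v (Ty.union t1 t2)
  | obj {c : String} {gs fs : Finset String} (hsub : fs ⊆ gs)
      {vch : {f : String // f ∈ gs} → Val} {ch : {f : String // f ∈ fs} → Ty} :
      (∀ (f : String) (h : f ∈ fs), R (vch ⟨f, hsub h⟩) (ch ⟨f, h⟩)) →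
      MemStep R (Val.obj c gs vch) (Ty.obj c fs ch)

/-- The membership relation `v ∈ τ`: greatest fixed point of `MemStep`,
i.e. existence of a contractive, possibly infinite derivation. -/
def MemVal (v : Val) (t : Ty) : Prop :=
  ∃ R : Val → Ty → Prop, (∀ w s, R w s → MemStep R w s) ∧ R v t

/-! ## The non-emptiness predicate `↑τ` -/

/-- One inductive layer of the non-emptiness rules: premises of (↑∨L)/(↑∨R)
are inductive (contractiveness), premises of (↑obj) are coinductive. -/
inductive NEStep (R : Ty → Prop) : Ty → Prop where
  | int : NEStep R Ty.int
  | unionL {t1 t2 : Ty} : NEStep R t1 → NEStep R (Ty.union t1 t2)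
  | unionR {t1 t2 : Ty} : NEStep R t2 → NEStep R (Ty.union t1 t2)
  | obj {c : String} {fs : Finset String} {ch : {f : String // f ∈ fs} → Ty} :
      (∀ (f : String) (h : f ∈ fs), R (ch ⟨f, h⟩)) →
      NEStep R (Ty.obj c fs ch)

/-- The non-emptiness predicate `↑τ`: greatest fixed point of `NEStep`. -/
def NotEmpty (t : Ty) : Prop :=
  ∃ R : Ty → Prop, (∀ s, R s → NEStep R s) ∧ R t

/-- There is a contractive derivation of `t ≤ s` whose first (root) applied
rule is (∨R1), (∨R2) or (obj). -/
def SubtyHeadUnionROrObj (t s : Ty) : Prop :=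
  (∃ s1 s2 : Ty, s = Ty.union s1 s2 ∧ (Subty t s1 ∨ Subty t s2)) ∨
  (∃ (c : String) (fs fs' : Finset String) (hsub : fs' ⊆ fs)
      (ch : {f : String // f ∈ fs} → Ty) (ch' : {f : String // f ∈ fs'} → Ty),
      t = Ty.obj c fs ch ∧ s = Ty.obj c fs' ch' ∧
      ∀ (f : String) (h : f ∈ fs'), Subty (ch ⟨f, hsub h⟩) (ch' ⟨f, h⟩))


/-! ## Auxiliary lemmas -/

/-- Head shape of a type. -/
def tyHead (t : Ty) : TyShape := (PFunctor.M.dest t).1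

@[simp] lemma tyHead_int : tyHead Ty.int = TyShape.int := rfl
@[simp] lemma tyHead_union (t1 t2 : Ty) : tyHead (Ty.union t1 t2) = TyShape.union := rfl
@[simp] lemma tyHead_obj (c : String) (fs : Finset String)
    (ch : {f : String // f ∈ fs} → Ty) : tyHead (Ty.obj c fs ch) = TyShape.obj c fs := rfl

lemma Ty.obj_inj {c c' : String} {fs fs' : Finset String}
    {ch : {f : String // f ∈ fs} → Ty} {ch' : {f : String // f ∈ fs'} → Ty}
    (h : Ty.obj c fs ch = Ty.obj c' fs' ch') :
    c = c' ∧ fs = fs' ∧ HEq ch ch' := by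
  have h2 := PFunctor.M.mk_inj h
  injection h2 with h1 h3
  injection h1 with hc hf
  subst hc; subst hf
  exact ⟨rfl, rfl, h3⟩

lemma Ty.union_inj {t1 t2 s1 s2 : Ty} (h : Ty.union t1 t2 = Ty.union s1 s2) :
    t1 = s1 ∧ t2 = s2 := by
  have h2 := PFunctor.M.mk_inj h
  injection h2 with h1 h3
  exact ⟨congrFun h3 true, congrFun h3 false⟩

lemma SubStep.mono {R R' : Ty → Ty → Prop} (h : ∀ x y, R x y → R' x y) :
    ∀ {t s}, SubStep R t s → SubStep R' t s := by
  intro t s hs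
  induction hs with
  | int => exact .int
  | unionR1 _ ih => exact .unionR1 ih
  | unionR2 _ ih => exact .unionR2 ih
  | unionL h1 h2 => exact .unionL (h _ _ h1) (h _ _ h2)
  | obj hsub hch => exact .obj hsub (fun f hf => h _ _ (hch f hf))
  | distr hf he h1 h2 => exact .distr hf he (h _ _ h1) (h _ _ h2)

lemma MemStep.mono {R R' : Val → Ty → Prop} (h : ∀ x y, R x y → R' x y) :
    ∀ {v t}, MemStep R v t → MemStep R' v t := by
  intro v t hm
  induction hm with
  | int i => exact .int i
  | unionL _ ih => exact .unionL ih
  | unionR _ ih => exact .unionR ih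
  | obj hsub hch => exact .obj hsub (fun f hf => h _ _ (hch f hf))

lemma substep_subty {RS : Ty → Ty → Prop} (hRS : ∀ x y, RS x y → SubStep RS x y)
    {t s : Ty} (h : SubStep RS t s) : Subty t s := by
  refine ⟨fun x y => RS x y ∨ SubStep RS x y, ?_, Or.inr h⟩
  rintro x y (hx | hx)
  · exact SubStep.mono (fun a b hb => Or.inl hb) (hRS _ _ hx)
  · exact SubStep.mono (fun a b hb => Or.inl hb) hx

lemma memval_obj {RM : Val → Ty → Prop} (hRM : ∀ w s, RM w s → MemStep RM w s)
    {c : String} {gs fs : Finset String} (hss : fs ⊆ gs)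
    {vch : {f : String // f ∈ gs} → Val} {ch : {f : String // f ∈ fs} → Ty}
    (h : ∀ (f : String) (hf : f ∈ fs), MemStep RM (vch ⟨f, hss hf⟩) (ch ⟨f, hf⟩)) :
    MemVal (Val.obj c gs vch) (Ty.obj c fs ch) := by
  refine ⟨fun w s => MemStep (fun a b => RM a b ∨ MemStep RM a b) w s, ?_,
    .obj hss (fun f hf => Or.inr (h f hf))⟩
  intro w s hx
  refine MemStep.mono ?_ hx
  rintro a b (hb | hb)
  · exact MemStep.mono (fun x y hy => Or.inl hy) (hRM _ _ hb)
  · exact MemStep.mono (fun x y hy => Or.inl hy) hb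

/-- Membership derivations with a depth counting (∨L)/(∨R) applications. -/
inductive MemDepth (R : Val → Ty → Prop) : Val → Ty → ℕ → Prop where
  | int (i : ℤ) : MemDepth R (Val.int i) Ty.int 0
  | unionL {v : Val} {t1 t2 : Ty} {n : ℕ} :
      MemDepth R v t1 n → MemDepth R v (Ty.union t1 t2) (n + 1)
  | unionR {v : Val} {t1 t2 : Ty} {n : ℕ} :
      MemDepth R v t2 n → MemDepth R v (Ty.union t1 t2) (n + 1)
  | obj {c : String} {gs fs : Finset String} (hsub : fs ⊆ gs)
      {vch : {f : String // f ∈ gs} → Val} {ch : {f : String // f ∈ fs} → Ty} :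
      (∀ (f : String) (h : f ∈ fs), R (vch ⟨f, hsub h⟩) (ch ⟨f, h⟩)) →
      MemDepth R (Val.obj c gs vch) (Ty.obj c fs ch) 0

lemma memstep_depth {R : Val → Ty → Prop} {v : Val} {t : Ty} (h : MemStep R v t) :
    ∃ n, MemDepth R v t n := by
  induction h with
  | int i => exact ⟨0, .int i⟩
  | unionL _ ih => obtain ⟨n, hn⟩ := ih; exact ⟨n + 1, .unionL hn⟩
  | unionR _ ih => obtain ⟨n, hn⟩ := ih; exact ⟨n + 1, .unionR hn⟩
  | obj hsub hch => exact ⟨0, .obj hsub hch⟩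

lemma memdepth_step {R : Val → Ty → Prop} {v : Val} {t : Ty} {n : ℕ}
    (h : MemDepth R v t n) : MemStep R v t := by
  induction h with
  | int i => exact .int i
  | unionL _ ih => exact .unionL ih
  | unionR _ ih => exact .unionR ih
  | obj hsub hch => exact .obj hsub hch

lemma memdepth_union_inv {R : Val → Ty → Prop} {v : Val} {t1 t2 : Ty} {n : ℕ}
    (h : MemDepth R v (Ty.union t1 t2) n) :
    ∃ m, m < n ∧ (MemDepth R v t1 m ∨ MemDepth R v t2 m) := by
  generalize ht : Ty.union t1 t2 = t at h
  cases h with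
  | int i => exact absurd (congrArg tyHead ht) (by simp)
  | unionL h1 =>
      obtain ⟨rfl, rfl⟩ := Ty.union_inj ht
      exact ⟨_, Nat.lt_succ_self _, Or.inl h1⟩
  | unionR h1 =>
      obtain ⟨rfl, rfl⟩ := Ty.union_inj ht
      exact ⟨_, Nat.lt_succ_self _, Or.inr h1⟩
  | obj hsub hch => exact absurd (congrArg tyHead ht) (by simp)

lemma main_lemma {RS : Ty → Ty → Prop} (hRS : ∀ x y, RS x y → SubStep RS x y)
    {RM : Val → Ty → Prop} (hRM : ∀ w s, RM w s → MemStep RM w s)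
    (c : String) (gs : Finset String) (vch : {f : String // f ∈ gs} → Val)
    (fs : Finset String) (hss : fs ⊆ gs) (σ : Ty) :
    ∀ (N : ℕ) (ch : {f : String // f ∈ fs} → Ty) (d : {f : String // f ∈ fs} → ℕ),
      (∑ f ∈ fs.attach, d f ≤ N) →
      SubStep RS (Ty.obj c fs ch) σ →
      (∀ (f : String) (h : f ∈ fs),
        MemDepth RM (vch ⟨f, hss h⟩) (ch ⟨f, h⟩) (d ⟨f, h⟩)) →
      ∃ ch' : {f : String // f ∈ fs} → Ty,
        MemVal (Val.obj c gs vch) (Ty.obj c fs ch') ∧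
        SubtyHeadUnionROrObj (Ty.obj c fs ch') σ := by
  intro N
  induction N using Nat.strong_induction_on with
  | _ N IH =>
    intro ch d hd hs hm
    generalize ht : Ty.obj c fs ch = τ at hs
    cases hs with
    | int => exact absurd (congrArg tyHead ht) (by simp)
    | unionR1 h1 =>
        subst ht
        exact ⟨ch, memval_obj hRM hss (fun f hf => memdepth_step (hm f hf)),
          Or.inl ⟨_, _, rfl, Or.inl (substep_subty hRS h1)⟩⟩
    | unionR2 h1 =>
        subst ht
        exact ⟨ch, memval_obj hRM hss (fun f hf => memdepth_step (hm f hf)),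
          Or.inl ⟨_, _, rfl, Or.inr (substep_subty hRS h1)⟩⟩
    | unionL h1 h2 => exact absurd (congrArg tyHead ht) (by simp)
    | obj hsub hch =>
        obtain ⟨e1, e2, hcc⟩ := Ty.obj_inj ht
        subst e1; subst e2
        obtain rfl := eq_of_heq hcc
        exact ⟨_, memval_obj hRM hss (fun f hf => memdepth_step (hm f hf)),
          Or.inr ⟨c, fs, _, hsub, _, _, rfl, rfl,
            fun f h => ⟨RS, hRS, hch f h⟩⟩⟩
    | @distr c1 fs1 ch1 f hf s1 s2 t he h1 h2 =>
        obtain ⟨e1, e2, hcc⟩ := Ty.obj_inj ht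
        subst e1; subst e2
        obtain rfl := eq_of_heq hcc
        have hmf := hm f hf
        rw [he] at hmf
        obtain ⟨m, hmlt, hcase⟩ := memdepth_union_inv hmf
        have step : ∀ s : Ty,
            RS (Ty.obj c fs fun g => if g.1 = f then s else ch g) σ →
            MemDepth RM (vch ⟨f, hss hf⟩) s m →
            ∃ ch' : {f : String // f ∈ fs} → Ty,
              MemVal (Val.obj c gs vch) (Ty.obj c fs ch') ∧
              SubtyHeadUnionROrObj (Ty.obj c fs ch') σ := by
          intro s hr hms
          set chN : {f : String // f ∈ fs} → Ty :=
            fun g => if g.1 = f then s else ch g with hchN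
          set dN : {f : String // f ∈ fs} → ℕ :=
            fun g => if g.1 = f then m else d g with hdN
          have hmN : ∀ (g : String) (hg : g ∈ fs),
              MemDepth RM (vch ⟨g, hss hg⟩) (chN ⟨g, hg⟩) (dN ⟨g, hg⟩) := by
            intro g hg
            by_cases hgf : g = f
            · subst hgf
              show MemDepth RM _ (if g = g then s else ch ⟨g, hg⟩)
                (if g = g then m else d ⟨g, hg⟩)
              rw [if_pos rfl, if_pos rfl]
              exact hms
            · show MemDepth RM _ (if g = f then s else ch ⟨g, hg⟩)
                (if g = f then m else d ⟨g, hg⟩)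
              rw [if_neg hgf, if_neg hgf]
              exact hm g hg
          have hlt : ∑ g ∈ fs.attach, dN g < ∑ g ∈ fs.attach, d g := by
            refine Finset.sum_lt_sum (fun g _ => ?_) ⟨⟨f, hf⟩, Finset.mem_attach _ _, ?_⟩
            · show (if g.1 = f then m else d g) ≤ d g
              by_cases hgf : g.1 = f
              · rw [if_pos hgf]
                have hge : g = ⟨f, hf⟩ := Subtype.ext hgf
                rw [hge]
                exact le_of_lt hmlt
              · rw [if_neg hgf]
            · show (if f = f then m else d ⟨f, hf⟩) < d ⟨f, hf⟩
              rw [if_pos rfl]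
              exact hmlt
          exact IH (∑ g ∈ fs.attach, dN g) (lt_of_lt_of_le hlt hd) chN dN le_rfl
            (hRS _ _ hr) hmN
        cases hcase with
        | inl hc => exact step s1 h1 hc
        | inr hc => exact step s2 h2 hc

/-- If `τ` is an object type with `τ ≤ σ` and `v ∈ τ`, then there is an object
type `τ′` with `v ∈ τ′` and a contractive derivation of `τ′ ≤ σ` whose first
applied rule is (∨R1), (∨R2) or (obj). -/
theorem object_subtype_mem_head (c : String) (fs : Finset String)
    (ch : {f : String // f ∈ fs} → Ty) (σ : Ty) (v : Val)
    (hsub : Subty (Ty.obj c fs ch) σ) (hmem : MemVal v (Ty.obj c fs ch)) :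
    ∃ (c' : String) (fs' : Finset String) (ch' : {f : String // f ∈ fs'} → Ty),
      MemVal v (Ty.obj c' fs' ch') ∧ SubtyHeadUnionROrObj (Ty.obj c' fs' ch') σ := by
  obtain ⟨RS, hRS, h0⟩ := hsub
  obtain ⟨RM, hRM, hm0⟩ := hmem
  have hms := hRM _ _ hm0
  generalize ht : Ty.obj c fs ch = τ at hms
  cases hms with
  | int i => exact absurd (congrArg tyHead ht) (by simp)
  | unionL h1 => exact absurd (congrArg tyHead ht) (by simp)
  | unionR h1 => exact absurd (congrArg tyHead ht) (by simp)
  | @obj c2 gs fs2 hsub2 vch ch2 hch =>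
      obtain ⟨e1, e2, hcc⟩ := Ty.obj_inj ht
      subst e1; subst e2
      obtain rfl := eq_of_heq hcc
      have hdep : ∀ g : {f : String // f ∈ fs}, ∃ n,
          MemDepth RM (vch ⟨g.1, hsub2 g.2⟩) (ch g) n :=
        fun g => memstep_depth (hRM _ _ (hch g.1 g.2))
      choose d hd using hdep
      obtain ⟨ch', hmv, hh⟩ := main_lemma hRS hRM c gs vch fs hsub2 σ
        (∑ g ∈ fs.attach, d g) ch d le_rfl (hRS _ _ h0) (fun f h => hd ⟨f, h⟩)
      exact ⟨c, fs, ch', hmv, hh⟩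
end

section
/- For every type τ, if ⟦τ⟧ ≠ ∅ (i.e., there exists a value v with v ∈ τ), then ↑τ holds. -/
/-- Completeness of `↑τ`: if `⟦τ⟧ ≠ ∅` then `↑τ` holds. -/
theorem notEmpty_complete (t : Ty) (h : ∃ v : Val, MemVal v t) : NotEmpty t := by
  refine ⟨fun s => ∃ v : Val, MemVal v s, ?_, h⟩
  rintro s ⟨v, R, hR, hvs⟩
  have step := hR v s hvs
  clear hvs
  induction step with
  | int i => exact NEStep.int
  | unionL _ ih => exact NEStep.unionL ih
  | unionR _ ih => exact NEStep.unionR ih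
  | obj hsub hch =>
    exact NEStep.obj (fun f hf => ⟨_, R, hR, hch f hf⟩)
end

section
/- The extended subtyping relation, obtained by adding to the six subtyping rules the axiom (empty): τ1 ≤ τ2 for all τ2 whenever ↑τ1 does not hold, is sound with respect to containment of type interpretations: for all types τ1 and τ2, if τ1 ≤ τ2 is derivable by a contractive derivation in the extended system, then ⟦τ1⟧ ⊆ ⟦τ2⟧. -/
/-- One inductive layer of the extended subtyping rules: the six subtyping
rules plus the axiom (empty): `τ1 ≤ τ2` whenever `↑τ1` does not hold. -/
inductive SubEStep (R : Ty → Ty → Prop) : Ty → Ty → Prop where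
  | int : SubEStep R Ty.int Ty.int
  | unionR1 {t t1 t2 : Ty} : SubEStep R t t1 → SubEStep R t (Ty.union t1 t2)
  | unionR2 {t t1 t2 : Ty} : SubEStep R t t2 → SubEStep R t (Ty.union t1 t2)
  | unionL {t1 t2 t : Ty} : R t1 t → R t2 t → SubEStep R (Ty.union t1 t2) t
  | obj {c : String} {fs fs' : Finset String} (hsub : fs' ⊆ fs)
      {ch : {f : String // f ∈ fs} → Ty} {ch' : {f : String // f ∈ fs'} → Ty} :
      (∀ (f : String) (h : f ∈ fs'), R (ch ⟨f, hsub h⟩) (ch' ⟨f, h⟩)) →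
      SubEStep R (Ty.obj c fs ch) (Ty.obj c fs' ch')
  | distr {c : String} {fs : Finset String} {ch : {f : String // f ∈ fs} → Ty}
      {f : String} (hf : f ∈ fs) {s1 s2 t : Ty} :
      ch ⟨f, hf⟩ = Ty.union s1 s2 →
      R (Ty.obj c fs (fun g => if g.1 = f then s1 else ch g)) t →
      R (Ty.obj c fs (fun g => if g.1 = f then s2 else ch g)) t →
      SubEStep R (Ty.obj c fs ch) t
  | empty {t1 t2 : Ty} : ¬ NotEmpty t1 → SubEStep R t1 t2

/-- The extended subtyping relation: existence of a contractive, possibly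
infinite derivation in the extended system. -/
def SubE (t1 t2 : Ty) : Prop :=
  ∃ R : Ty → Ty → Prop, (∀ x y, R x y → SubEStep R x y) ∧ R t1 t2

namespace ExtSound

/-! ### Injectivity and discrimination for type constructors -/

lemma int_ne_union {a b : Ty} : Ty.int ≠ Ty.union a b := fun h =>
  TyShape.noConfusion (congrArg Sigma.fst (PFunctor.M.mk_inj h))

lemma int_ne_obj {c fs ch} : Ty.int ≠ Ty.obj c fs ch := fun h =>
  TyShape.noConfusion (congrArg Sigma.fst (PFunctor.M.mk_inj h))

lemma obj_ne_union {c fs ch} {a b : Ty} : Ty.obj c fs ch ≠ Ty.union a b := fun h =>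
  TyShape.noConfusion (congrArg Sigma.fst (PFunctor.M.mk_inj h))

lemma union_inj {a b c d : Ty} (h : Ty.union a b = Ty.union c d) : a = c ∧ b = d := by
  have h' := PFunctor.M.mk_inj h
  injection h' with h1 h2
  exact ⟨congrFun h2 true, congrFun h2 false⟩

lemma obj_inj {c1 c2 : String} {fs1 fs2 : Finset String}
    {ch1 : {f : String // f ∈ fs1} → Ty} {ch2 : {f : String // f ∈ fs2} → Ty}
    (h : Ty.obj c1 fs1 ch1 = Ty.obj c2 fs2 ch2) :
    c1 = c2 ∧ fs1 = fs2 ∧ HEq ch1 ch2 := by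
  have h' := PFunctor.M.mk_inj h
  injection h' with h1 h2
  injection h1 with hc hfs
  exact ⟨hc, hfs, h2⟩

end ExtSound
namespace ExtSound

/-! ### Monotonicity, unfold, fold -/

lemma memStep_mono {R S : Val → Ty → Prop} (hRS : ∀ v t, R v t → S v t) :
    ∀ {v t}, MemStep R v t → MemStep S v t := by
  intro v t h
  induction h with
  | int i => exact .int i
  | unionL _ ih => exact .unionL ih
  | unionR _ ih => exact .unionR ih
  | obj hsub hf => exact .obj hsub fun f h => hRS _ _ (hf f h)

lemma subEStep_mono {R S : Ty → Ty → Prop} (hRS : ∀ x y, R x y → S x y) :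
    ∀ {t1 t2}, SubEStep R t1 t2 → SubEStep S t1 t2 := by
  intro t1 t2 h
  induction h with
  | int => exact .int
  | unionR1 _ ih => exact .unionR1 ih
  | unionR2 _ ih => exact .unionR2 ih
  | unionL h1 h2 => exact .unionL (hRS _ _ h1) (hRS _ _ h2)
  | obj hsub hf => exact .obj hsub fun f h => hRS _ _ (hf f h)
  | distr hf he h1 h2 => exact .distr hf he (hRS _ _ h1) (hRS _ _ h2)
  | empty hne => exact .empty hne

lemma memVal_unfold {v t} (h : MemVal v t) : MemStep MemVal v t := by
  obtain ⟨R, hcl, hr⟩ := h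
  exact memStep_mono (fun w s hw => ⟨R, hcl, hw⟩) (hcl _ _ hr)

lemma memVal_fold {v t} (h : MemStep MemVal v t) : MemVal v t :=
  ⟨fun w s => MemStep MemVal w s, fun w s hw => memStep_mono (fun _ _ h' => memVal_unfold h') hw, h⟩

lemma subE_unfold {t1 t2} (h : SubE t1 t2) : SubEStep SubE t1 t2 := by
  obtain ⟨R, hcl, hr⟩ := h
  exact subEStep_mono (fun x y hx => ⟨R, hcl, hx⟩) (hcl _ _ hr)

/-! ### Membership implies non-emptiness -/

lemma memstep_to_nestep {v t} (h : MemStep MemVal v t) :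
    NEStep (fun s => ∃ w, MemVal w s) t := by
  induction h with
  | int i => exact .int
  | unionL _ ih => exact .unionL ih
  | unionR _ ih => exact .unionR ih
  | obj hsub hf => exact .obj fun f h => ⟨_, hf f h⟩

lemma memval_notEmpty {v t} (h : MemVal v t) : NotEmpty t :=
  ⟨fun s => ∃ w, MemVal w s, fun _ ⟨_, hw⟩ => memstep_to_nestep (memVal_unfold hw), ⟨v, h⟩⟩

end ExtSound
namespace ExtSound

/-! ### Depth-indexed membership layers -/

inductive MemStepN (R : Val → Ty → Prop) : ℕ → Val → Ty → Prop where
  | int (i : ℤ) (n : ℕ) : MemStepN R n (Val.int i) Ty.int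
  | unionL {n : ℕ} {v : Val} {t1 t2 : Ty} :
      MemStepN R n v t1 → MemStepN R (n + 1) v (Ty.union t1 t2)
  | unionR {n : ℕ} {v : Val} {t1 t2 : Ty} :
      MemStepN R n v t2 → MemStepN R (n + 1) v (Ty.union t1 t2)
  | obj (n : ℕ) {c : String} {gs fs : Finset String} (hsub : fs ⊆ gs)
      {vch : {f : String // f ∈ gs} → Val} {ch : {f : String // f ∈ fs} → Ty} :
      (∀ (f : String) (h : f ∈ fs), R (vch ⟨f, hsub h⟩) (ch ⟨f, h⟩)) →
      MemStepN R n (Val.obj c gs vch) (Ty.obj c fs ch)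

lemma memStep_exists_n {R v t} (h : MemStep R v t) : ∃ n, MemStepN R n v t := by
  induction h with
  | int i => exact ⟨0, .int i 0⟩
  | unionL _ ih => exact ⟨ih.choose + 1, .unionL ih.choose_spec⟩
  | unionR _ ih => exact ⟨ih.choose + 1, .unionR ih.choose_spec⟩
  | obj hsub hf => exact ⟨0, .obj 0 hsub hf⟩

lemma memStepN_to_memStep {R n v t} (h : MemStepN R n v t) : MemStep R v t := by
  induction h with
  | int i _ => exact .int i
  | unionL _ ih => exact .unionL ih
  | unionR _ ih => exact .unionR ih
  | obj _ hsub hf => exact .obj hsub hf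

lemma memStepN_union_inv {R n v} {t1 t2 : Ty} (h : MemStepN R n v (Ty.union t1 t2)) :
    ∃ m, n = m + 1 ∧ (MemStepN R m v t1 ∨ MemStepN R m v t2) := by
  generalize hgen : Ty.union t1 t2 = s0 at h
  induction h with
  | int i _ => exact absurd hgen.symm int_ne_union
  | unionL h _ =>
    obtain ⟨h1, h2⟩ := union_inj hgen
    subst h1; subst h2
    exact ⟨_, rfl, Or.inl h⟩
  | unionR h _ =>
    obtain ⟨h1, h2⟩ := union_inj hgen
    subst h1; subst h2
    exact ⟨_, rfl, Or.inr h⟩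
  | obj _ hsub hf => exact absurd hgen.symm obj_ne_union

/-- The relation used to build the membership derivation in `t2`. -/
def Rfin (v : Val) (t : Ty) : Prop := ∃ s, MemVal v s ∧ SubE s t

end ExtSound
namespace ExtSound

lemma lemL : ∀ (S : ℕ) (c : String) (gs fs : Finset String) (hsub : fs ⊆ gs)
    (vch : {f : String // f ∈ gs} → Val) (ch : {f : String // f ∈ fs} → Ty)
    (nf : {f : String // f ∈ fs} → ℕ),
    (∀ (f : String) (h : f ∈ fs),
      MemStepN MemVal (nf ⟨f, h⟩) (vch ⟨f, hsub h⟩) (ch ⟨f, h⟩)) →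
    (∑ g ∈ fs.attach, nf g) ≤ S →
    ∀ t, SubEStep SubE (Ty.obj c fs ch) t → MemStep Rfin (Val.obj c gs vch) t := by
  intro S
  induction S using Nat.strong_induction_on with
  | _ S IH =>
  intro c gs fs hsub vch ch nf hder hsum t hst
  generalize hgen : Ty.obj c fs ch = s0 at hst
  induction hst with
  | int => exact absurd hgen.symm int_ne_obj
  | unionR1 h ih => exact .unionL (ih hgen)
  | unionR2 h ih => exact .unionR (ih hgen)
  | unionL h1 h2 => exact absurd hgen obj_ne_union
  | obj hsub' hf =>
    obtain ⟨hc, hfs, hch⟩ := obj_inj hgen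
    subst hc; subst hfs
    have hch' := eq_of_heq hch; subst hch'
    exact .obj (hsub'.trans hsub) fun f h =>
      ⟨ch ⟨f, hsub' h⟩,
        memVal_fold (memStepN_to_memStep (hder f (hsub' h))), hf f h⟩
  | distr hf heq hp1 hp2 =>
    obtain ⟨hc, hfs, hch⟩ := obj_inj hgen
    subst hc; subst hfs
    have hch' := eq_of_heq hch; subst hch'
    rename_i f0 s1 s2 t0
    have d := hder f0 hf
    rw [heq] at d
    obtain ⟨m, hm, hbranch⟩ := memStepN_union_inv d
    have key : ∀ σ : Ty, MemStepN MemVal m (vch ⟨f0, hsub hf⟩) σ →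
        SubE (Ty.obj c fs (fun g => if g.1 = f0 then σ else ch g)) t0 →
        MemStep Rfin (Val.obj c gs vch) t0 := by
      intro σ hb hp
      set nf' : {x // x ∈ fs} → ℕ := (fun g => if g.1 = f0 then m else nf g) with hnf'
      have hder' : ∀ (g : String) (h : g ∈ fs),
          MemStepN MemVal (nf' ⟨g, h⟩) (vch ⟨g, hsub h⟩)
            ((fun g => if g.1 = f0 then σ else ch g) ⟨g, h⟩) := by
        intro g h
        by_cases hgf : g = f0
        · subst hgf; simpa [hnf'] using hb
        · simpa [hnf', hgf] using hder g h
      have ha := Finset.mem_attach fs ⟨f0, hf⟩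
      have herase : ∀ g ∈ fs.attach.erase ⟨f0, hf⟩, nf' g = nf g := by
        intro g hg
        exact if_neg fun hgf => (Finset.ne_of_mem_erase hg) (Subtype.ext hgf)
      have hsum1 : ∑ g ∈ fs.attach, nf' g + 1 = ∑ g ∈ fs.attach, nf g := by
        have e1 : ∑ g ∈ fs.attach, nf g
            = nf ⟨f0, hf⟩ + ∑ g ∈ fs.attach.erase ⟨f0, hf⟩, nf g :=
          (Finset.add_sum_erase _ nf ha).symm
        have e2 : ∑ g ∈ fs.attach, nf' g
            = nf' ⟨f0, hf⟩ + ∑ g ∈ fs.attach.erase ⟨f0, hf⟩, nf' g :=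
          (Finset.add_sum_erase _ nf' ha).symm
        have e3 : ∑ g ∈ fs.attach.erase ⟨f0, hf⟩, nf' g
            = ∑ g ∈ fs.attach.erase ⟨f0, hf⟩, nf g :=
          Finset.sum_congr rfl herase
        have e4 : nf' ⟨f0, hf⟩ = m := if_pos rfl
        rw [e1, e2, e3, e4, hm]
        omega
      have hlt : ∑ g ∈ fs.attach, nf' g < S := by omega
      exact IH _ hlt c gs fs hsub vch _ nf' hder' le_rfl _ (subE_unfold hp)
    rcases hbranch with hb | hb
    · exact key s1 hb hp1
    · exact key s2 hb hp2
  | empty hne =>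
    subst hgen
    exact absurd (memval_notEmpty (memVal_fold (.obj hsub fun f h =>
      memVal_fold (memStepN_to_memStep (hder f h))))) hne

end ExtSound
namespace ExtSound

lemma lemA : ∀ (v : Val) (s : Ty), MemStep MemVal v s →
    ∀ t, SubEStep SubE s t → MemStep Rfin v t := by
  intro v s hm
  induction hm with
  | int i =>
    intro t hst
    generalize hgen : Ty.int = s0 at hst
    induction hst with
    | int => exact .int i
    | unionR1 h ih => exact .unionL (ih hgen)
    | unionR2 h ih => exact .unionR (ih hgen)
    | unionL h1 h2 => exact absurd hgen int_ne_union
    | obj hsub hf => exact absurd hgen int_ne_obj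
    | distr hf heq h1 h2 => exact absurd hgen int_ne_obj
    | empty hne =>
      subst hgen
      exact absurd (memval_notEmpty (memVal_fold (.int i))) hne
  | unionL hm' ih =>
    rename_i w τ1 τ2
    intro t hst
    generalize hgen : Ty.union τ1 τ2 = s0 at hst
    induction hst with
    | int => exact absurd hgen.symm int_ne_union
    | unionR1 h ih2 => exact .unionL (ih2 hgen)
    | unionR2 h ih2 => exact .unionR (ih2 hgen)
    | unionL h1 h2 =>
      obtain ⟨e1, e2⟩ := union_inj hgen
      subst e1; subst e2
      exact ih _ (subE_unfold h1)
    | obj hsub hf => exact absurd hgen.symm obj_ne_union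
    | distr hf heq h1 h2 => exact absurd hgen.symm obj_ne_union
    | empty hne =>
      subst hgen
      exact absurd (memval_notEmpty (memVal_fold (.unionL hm'))) hne
  | unionR hm' ih =>
    rename_i w τ1 τ2
    intro t hst
    generalize hgen : Ty.union τ1 τ2 = s0 at hst
    induction hst with
    | int => exact absurd hgen.symm int_ne_union
    | unionR1 h ih2 => exact .unionL (ih2 hgen)
    | unionR2 h ih2 => exact .unionR (ih2 hgen)
    | unionL h1 h2 =>
      obtain ⟨e1, e2⟩ := union_inj hgen
      subst e1; subst e2
      exact ih _ (subE_unfold h2)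
    | obj hsub hf => exact absurd hgen.symm obj_ne_union
    | distr hf heq h1 h2 => exact absurd hgen.symm obj_ne_union
    | empty hne =>
      subst hgen
      exact absurd (memval_notEmpty (memVal_fold (.unionR hm'))) hne
  | obj hsub hfields =>
    rename_i c gs fs vch ch
    intro t hst
    have hex : ∀ (f : String) (h : f ∈ fs),
        ∃ n, MemStepN MemVal n (vch ⟨f, hsub h⟩) (ch ⟨f, h⟩) :=
      fun f h => memStep_exists_n (memVal_unfold (hfields f h))
    choose nf hnf using hex
    exact lemL (∑ g ∈ fs.attach, nf g.1 g.2) c gs fs hsub vch ch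
      (fun g => nf g.1 g.2) (fun f h => hnf f h) le_rfl t hst

end ExtSound


/-- Soundness of the extended subtyping relation (with rule (empty)):
if `τ1 ≤ τ2` in the extended system then `⟦τ1⟧ ⊆ ⟦τ2⟧`. -/
theorem extended_subtyping_sound (t1 t2 : Ty) (h : SubE t1 t2) :
    ∀ v : Val, MemVal v t1 → MemVal v t2 := by
  intro v hv
  refine ⟨ExtSound.Rfin, ?_, ⟨t1, hv, h⟩⟩
  rintro w s ⟨mid, hmem, hsubE⟩
  exact ExtSound.lemA w mid (ExtSound.memVal_unfold hmem) s (ExtSound.subE_unfold hsubE)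
end

section
/- Let ⊥ be the regular type satisfying ⊥ = ⊥ ∨ ⊥. Then for every class name C, distinct field names f1, f2, and every type σ, the judgment obj C [f1:⊥, f2:σ] ≤ τ holds for every type τ, via the contractive derivation obtained by applying rule (distr) infinitely many times. -/
/-- If `⊥` is the regular type with `⊥ = ⊥ ∨ ⊥`, then for every class name
`C`, distinct field names `f1, f2` and type `σ`,
`obj C [f1:⊥, f2:σ] ≤ τ` holds for every type `τ`. -/
theorem obj_with_bot_field_subty_all (bot : Ty) (hbot : bot = Ty.union bot bot)
    (c f1 f2 : String) (hff : f1 ≠ f2) (σ : Ty) :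
    ∀ t : Ty, Subty (Ty.obj2 c f1 f2 bot σ) t := by
  intro t
  refine ⟨fun x y => x = Ty.obj2 c f1 f2 bot σ, ?_, rfl⟩
  rintro x y rfl
  have hf : f1 ∈ ({f1, f2} : Finset String) := Finset.mem_insert_self _ _
  have heq : (fun g : {f : String // f ∈ ({f1, f2} : Finset String)} =>
      if g.1 = f1 then bot else (if g.1 = f1 then bot else σ)) =
      (fun g : {f : String // f ∈ ({f1, f2} : Finset String)} =>
      if g.1 = f1 then bot else σ) := by
    funext g; by_cases h : g.1 = f1 <;> simp [h]
  refine SubStep.distr (s1 := bot) (s2 := bot) hf ?_ ?_ ?_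
  · simp [← hbot]
  · show Ty.obj c {f1, f2} _ = Ty.obj2 c f1 f2 bot σ
    unfold Ty.obj2; rw [heq]
  · show Ty.obj c {f1, f2} _ = Ty.obj2 c f1 f2 bot σ
    unfold Ty.obj2; rw [heq]
end

section
/- Let ⊥ be the regular type satisfying ⊥ = ⊥ ∨ ⊥. Then for every class name C and distinct field names f1, f2, the types ⊥ and obj C [f1:⊥, f2:int] are equivalent with respect to subtyping: both ⊥ ≤ obj C [f1:⊥, f2:int] and obj C [f1:⊥, f2:int] ≤ ⊥ hold. -/
/-- If `⊥` is the regular type with `⊥ = ⊥ ∨ ⊥`, then `⊥` and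
`obj C [f1:⊥, f2:int]` are equivalent w.r.t. subtyping. -/
theorem bot_equiv_obj_with_bot_field (bot : Ty) (hbot : bot = Ty.union bot bot)
    (c f1 f2 : String) (hff : f1 ≠ f2) :
    Subty bot (Ty.obj2 c f1 f2 bot Ty.int) ∧ Subty (Ty.obj2 c f1 f2 bot Ty.int) bot := by
  have hf : f1 ∈ ({f1, f2} : Finset String) := by simp
  set ch0 : {f : String // f ∈ ({f1, f2} : Finset String)} → Ty :=
    fun g => if g.1 = f1 then bot else Ty.int with hch0
  have hT : Ty.obj2 c f1 f2 bot Ty.int = Ty.obj c {f1, f2} ch0 := rfl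
  set T := Ty.obj c {f1, f2} ch0 with hTdef
  rw [hT]
  constructor
  · refine ⟨fun x y => x = bot ∧ y = T, ?_, rfl, rfl⟩
    rintro x y ⟨hx, hy⟩
    rw [hx, hy]
    have h := SubStep.unionL (R := fun x y => x = bot ∧ y = T) (t1 := bot) (t2 := bot)
      (t := T) ⟨rfl, rfl⟩ ⟨rfl, rfl⟩
    rwa [← hbot] at h
  · refine ⟨fun x y => x = T ∧ y = bot, ?_, rfl, rfl⟩
    rintro x y ⟨hx, hy⟩
    rw [hx, hy]
    have hch : (fun g : {f : String // f ∈ ({f1, f2} : Finset String)} =>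
        if g.1 = f1 then bot else ch0 g) = ch0 := by
      funext g
      by_cases h : g.1 = f1 <;> simp [hch0, h]
    refine SubStep.distr (f := f1) hf (s1 := bot) (s2 := bot) ?_ ?_ ?_
    · show ch0 ⟨f1, hf⟩ = Ty.union bot bot
      rw [hch0]; simpa using hbot
    · exact ⟨congrArg (Ty.obj c {f1, f2}) hch, rfl⟩
    · exact ⟨congrArg (Ty.obj c {f1, f2}) hch, rfl⟩
end

section
/- The subtyping relation is reflexive: for every type τ, there is a contractive derivation of τ ≤ τ, hence τ ≤ τ holds. -/
def ReflR : Ty → Ty → Prop :=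
  fun x y => x = y ∨ ∃ a b, y = Ty.union a b ∧ (x = a ∨ x = b)

lemma substep_reflR (x : Ty) : SubStep ReflR x x := by
  have hx : x = PFunctor.M.mk (PFunctor.M.dest x) := (PFunctor.M.mk_dest x).symm
  rcases hdef : PFunctor.M.dest x with ⟨sh, ch⟩
  cases sh with
  | int =>
      have : x = Ty.int := by
        rw [hx, hdef]
        unfold Ty.int
        congr 1
        exact congrArg _ (funext fun e => e.elim)
      rw [this]; exact SubStep.int
  | obj c fs =>
      have : x = Ty.obj c fs ch := by rw [hx, hdef]; rfl
      rw [this]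
      exact SubStep.obj (Finset.Subset.refl fs) (fun f h => Or.inl rfl)
  | union =>
      have : x = Ty.union (ch true) (ch false) := by
        rw [hx, hdef]
        unfold Ty.union
        congr 1
        exact congrArg _ (funext fun b => by cases b <;> rfl)
      rw [this]
      exact SubStep.unionL (Or.inr ⟨_, _, rfl, Or.inl rfl⟩)
        (Or.inr ⟨_, _, rfl, Or.inr rfl⟩)

/-- Subtyping is reflexive: `τ ≤ τ` for every type `τ`. -/
theorem subty_refl (t : Ty) : Subty t t := by
  refine ⟨ReflR, ?_, Or.inl rfl⟩
  rintro x y (rfl | ⟨a, b, rfl, rfl | rfl⟩)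
  · exact substep_reflR x
  · exact SubStep.unionR1 (substep_reflR _)
  · exact SubStep.unionR2 (substep_reflR _)
end

section
/- Let ⊥ be the regular type satisfying ⊥ = ⊥ ∨ ⊥, and let τ = obj C1 [f: obj C2 [g:⊥]] for class names C1, C2 and field names f, g. Then τ ≤ ⊥ is NOT derivable from the six subtyping rules (without the rule (empty)): every possible derivation of τ ≤ ⊥ is built by applying only rules (∨R1) and (∨R2), and is therefore not contractive. -/
private theorem mk_inj {P : PFunctor} {a b : P.Obj P.M}
    (h : PFunctor.M.mk a = PFunctor.M.mk b) : a = b := by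
  have := congrArg PFunctor.M.dest h
  rwa [PFunctor.M.dest_mk, PFunctor.M.dest_mk] at this

private theorem union_eq_union {a1 a2 b1 b2 : Ty} (h : Ty.union a1 a2 = Ty.union b1 b2) :
    a1 = b1 ∧ a2 = b2 := by
  have h2 := mk_inj h
  have h3 : (fun b => cond b a1 a2 : Bool → Ty) = fun b => cond b b1 b2 := by
    injection h2
  exact ⟨congrFun h3 true, congrFun h3 false⟩

/-- If `⊥` is the regular type with `⊥ = ⊥ ∨ ⊥`, then
`obj C1 [f: obj C2 [g:⊥]] ≤ ⊥` is not derivable from the six subtyping rules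
(without rule (empty)). -/
theorem nested_bot_not_subty_bot (bot : Ty) (hbot : bot = Ty.union bot bot)
    (c1 c2 f g : String) :
    ¬ Subty (Ty.obj1 c1 f (Ty.obj1 c2 g bot)) bot := by
  rintro ⟨R, hR, hrel⟩
  set inner := Ty.obj1 c2 g bot with hinner
  have key : ∀ t s, SubStep R t s → t = Ty.obj1 c1 f inner → s = bot → False := by
    intro t s h
    induction h with
    | int =>
      intro ht _
      have := congrArg Sigma.fst (mk_inj ht)
      simp [Ty.obj1, Ty.obj] at this
    | unionR1 _ ih =>
      intro ht hs
      exact ih ht (union_eq_union (hs.trans hbot)).1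
    | unionR2 _ ih =>
      intro ht hs
      exact ih ht (union_eq_union (hs.trans hbot)).2
    | unionL _ _ =>
      intro ht _
      have := congrArg Sigma.fst (mk_inj ht)
      simp [Ty.obj1, Ty.obj, Ty.union] at this
    | obj _ _ =>
      intro _ hs
      have := congrArg Sigma.fst (mk_inj (hs ▸ hbot.symm).symm)
      simp [Ty.obj, Ty.union] at this
    | @distr c fs ch f0 hf s1 s2 t0 hch _ _ =>
      intro ht _
      have h2 := mk_inj ht
      injection h2 with h1 hcheq
      injection h1 with hc hfs
      subst hc hfs
      have hch' : ch = fun _ => inner := eq_of_heq hcheq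
      rw [hch'] at hch
      have := congrArg Sigma.fst (mk_inj hch)
      simp [hinner, Ty.obj1, Ty.obj, Ty.union] at this
  exact key _ _ (hR _ _ hrel) rfl rfl
end
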